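/- Let L/K be a finite field extension in characteristic p > 0. Then D(L/K) = End_{L^{sep}}(L), where L^{sep} is the separable closure of K in L. In particular D(L/K) is a central simple L^{sep}-algebra of degree [L : L^{sep}]. -/

import Mathlib

/-- The filtration of Grothendieck differential operators on the `K`-algebra `L`:
`D_0` is the set of multiplication operators and
`D_{i+1} = {δ : [δ, l·] ∈ D_i for all l ∈ L}`. -/
def diffOpFil (K L : Type*) [Field K] [Field L] [Algebra K L] :
    ℕ → Set (Module.End K L)
  | 0 => Set.range ⇑(Algebra.lmul K L)
  | n + 1 =>
      {δ | ∀ l : L, δ * Algebra.lmul K L l - Algebra.lmul K L l * δ ∈ diffOpFil K L n}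

/-- The algebra `D(L/K)` of Grothendieck differential operators on `L` over `K`,
as a subset of `End_K(L)`: the union of the filtration `diffOpFil`. -/
def diffOps (K L : Type*) [Field K] [Field L] [Algebra K L] : Set (Module.End K L) :=
  ⋃ n, diffOpFil K L n

section Aux

open Polynomial

variable (K L : Type*) [Field K] [Field L] [Algebra K L]

/-- The commutator with multiplication operators, as a linear map. -/
noncomputable def opD : L →ₗ[K] Module.End K (Module.End K L) where
  toFun l := LinearMap.mulRight K (Algebra.lmul K L l) - LinearMap.mulLeft K (Algebra.lmul K L l)
  map_add' x y := by
    ext δ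
    simp only [map_add, LinearMap.sub_apply, LinearMap.mulRight_apply, LinearMap.mulLeft_apply,
      LinearMap.add_apply, mul_add, add_mul]
    abel
  map_smul' c x := by
    ext δ
    simp only [map_smul, LinearMap.sub_apply, LinearMap.mulRight_apply, LinearMap.mulLeft_apply,
      RingHom.id_apply, LinearMap.smul_apply, smul_sub, mul_smul_comm, smul_mul_assoc]

lemma opD_def (l : L) : opD K L l
    = LinearMap.mulRight K (Algebra.lmul K L l) - LinearMap.mulLeft K (Algebra.lmul K L l) := rfl

lemma lmul_app (a x : L) : Algebra.lmul K L a x = a * x := rfl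

@[simp] lemma opD_apply (l : L) (δ : Module.End K L) :
    opD K L l δ = δ * Algebra.lmul K L l - Algebra.lmul K L l * δ := rfl

lemma lmul_commute (x y : L) : Commute (Algebra.lmul K L x) (Algebra.lmul K L y) := by
  unfold Commute SemiconjBy
  rw [← map_mul, ← map_mul, mul_comm]

lemma opD_commute (x y : L) : Commute (opD K L x) (opD K L y) := by
  have h := lmul_commute K L x y
  set a := Algebra.lmul K L x
  set b := Algebra.lmul K L y
  have h1 : Commute (LinearMap.mulRight K a) (LinearMap.mulRight K b) := by
    ext δ
    simp only [Module.End.mul_apply, LinearMap.mulRight_apply, mul_assoc, h.eq]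
  have h2 : Commute (LinearMap.mulLeft K a) (LinearMap.mulLeft K b) := by
    ext δ
    simp only [Module.End.mul_apply, LinearMap.mulLeft_apply, ← mul_assoc, h.eq]
  have h3 : Commute (LinearMap.mulLeft K a) (LinearMap.mulRight K b) :=
    LinearMap.commute_mulLeft_right a b
  have h4 : Commute (LinearMap.mulLeft K b) (LinearMap.mulRight K a) :=
    LinearMap.commute_mulLeft_right b a
  rw [opD_def, opD_def]
  exact ((Commute.sub_right (R := Module.End K (Module.End K L)) h1 h4.symm).sub_left
    (Commute.sub_right (R := Module.End K (Module.End K L)) h3 h2))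

/-- The filtration is increasing. -/
lemma diffOpFil_mono : ∀ n, diffOpFil K L n ⊆ diffOpFil K L (n + 1) := by
  intro n
  induction n with
  | zero =>
    rintro δ ⟨a, rfl⟩ l
    show _ ∈ diffOpFil K L 0
    refine ⟨0, ?_⟩
    rw [map_zero, ← map_mul, ← map_mul, mul_comm, sub_self]
  | succ n ih =>
    intro δ hδ l
    exact ih (hδ l)

/-- If all iterated commutators of length `n+1` vanish, then `δ` is a differential
operator of order at most `n`. -/
lemma mem_fil_of_fold (n : ℕ) : ∀ δ : Module.End K L,
    (∀ ls : List L, ls.length = n + 1 → ls.foldr (fun l x => opD K L l x) δ = 0) →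
    δ ∈ diffOpFil K L n := by
  induction n with
  | zero =>
    intro δ h
    have h1 : ∀ l : L, δ * Algebra.lmul K L l = Algebra.lmul K L l * δ := by
      intro l
      have := h [l] rfl
      simp only [List.foldr, opD_apply] at this
      exact sub_eq_zero.1 this
    refine ⟨δ 1, ?_⟩
    ext x
    have h2 := LinearMap.congr_fun (h1 x) 1
    simp only [Module.End.mul_apply] at h2
    have h3 : δ x = x * δ 1 := by simpa [lmul_app] using h2
    show Algebra.lmul K L (δ 1) x = δ x
    rw [lmul_app, mul_comm]
    exact h3.symm
  | succ n ih =>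
    intro δ h l
    refine ih _ (fun ls hls => ?_)
    have := h (ls ++ [l]) (by simp [hls])
    rwa [List.foldr_append] at this

section PolyComm

variable {R : Type*} [Ring R]

lemma comm_pow (δ T c : R) (hc : δ * T - T * δ = c) (hTc : T * c = c * T) (n : ℕ) :
    δ * T ^ (n + 1) - T ^ (n + 1) * δ = (n + 1) • (T ^ n * c) := by
  induction n with
  | zero => simpa using hc
  | succ n ih =>
    have key : δ * T ^ (n + 2) - T ^ (n + 2) * δ
        = (δ * T ^ (n + 1) - T ^ (n + 1) * δ) * T + T ^ (n + 1) * (δ * T - T * δ) := by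
      have h1 : T ^ (n + 2) = T ^ (n + 1) * T := by rw [pow_succ]
      rw [h1]
      noncomm_ring
    rw [key, ih, hc]
    have hTn : ∀ m : ℕ, T ^ m * c = c * T ^ m := by
      intro m
      induction m with
      | zero => simp
      | succ m ihm => rw [pow_succ, mul_assoc, hTc, ← mul_assoc, ihm, mul_assoc]
    rw [smul_mul_assoc, mul_assoc, ← hTc, ← mul_assoc, ← pow_succ]
    rw [succ_nsmul (T ^ (n + 1) * c) (n + 1)]

lemma comm_aeval [Algebra K R] (δ T c : R) (hc : δ * T - T * δ = c) (hTc : T * c = c * T)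
    (f : K[X]) :
    δ * aeval T f - aeval T f * δ = aeval T (derivative f) * c := by
  induction f using Polynomial.induction_on' with
  | add f g hf hg =>
    have key : δ * (aeval T f + aeval T g) - (aeval T f + aeval T g) * δ
        = (δ * aeval T f - aeval T f * δ) + (δ * aeval T g - aeval T g * δ) := by
      noncomm_ring
    rw [map_add, key, hf, hg, map_add, map_add, add_mul]
  | monomial n a =>
    cases n with
    | zero =>
      rw [derivative_monomial]
      simp only [Nat.cast_zero, mul_zero, Polynomial.monomial_zero_right, map_zero, zero_mul]
      rw [aeval_monomial, pow_zero, mul_one, sub_eq_zero, Algebra.commutes]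
    | succ n =>
      rw [derivative_monomial, aeval_monomial, aeval_monomial]
      have hA : δ * (algebraMap K R a * T ^ (n + 1))
          = algebraMap K R a * (δ * T ^ (n + 1)) := by
        rw [← mul_assoc, ← Algebra.commutes a δ, mul_assoc]
      have h1 : δ * (algebraMap K R a * T ^ (n + 1)) - algebraMap K R a * T ^ (n + 1) * δ
          = algebraMap K R a * (δ * T ^ (n + 1) - T ^ (n + 1) * δ) := by
        rw [hA, mul_assoc, ← mul_sub]
      rw [h1, comm_pow δ T c hc hTc n]
      simp only [Nat.add_sub_cancel, nsmul_eq_mul, Nat.cast_add, Nat.cast_one, map_mul,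
        map_natCast, map_add, map_one]
      simp [mul_assoc]

end PolyComm

/-- Differential operators commute with multiplication by separable elements. -/
lemma fil_comm (n : ℕ) : ∀ δ ∈ diffOpFil K L n, ∀ s ∈ separableClosure K L,
    δ * Algebra.lmul K L s = Algebra.lmul K L s * δ := by
  induction n with
  | zero =>
    rintro δ ⟨a, rfl⟩ s _
    rw [← map_mul, ← map_mul, mul_comm]
  | succ n ih =>
    intro δ hδ s hs
    rw [← sub_eq_zero]
    set c := δ * Algebra.lmul K L s - Algebra.lmul K L s * δ with hcdef
    have hcD : c ∈ diffOpFil K L n := hδ s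
    have hTc : Algebra.lmul K L s * c = c * Algebra.lmul K L s := (ih c hcD s hs).symm
    have hsep : IsSeparable K s := mem_separableClosure_iff.1 hs
    have h0 : aeval s (minpoly K s) = 0 := minpoly.aeval K s
    have hder : aeval s (derivative (minpoly K s)) ≠ 0 :=
      hsep.aeval_derivative_ne_zero h0
    have key := comm_aeval K δ (Algebra.lmul K L s) c hcdef.symm hTc (minpoly K s)
    have h1 : ∀ g : K[X], aeval (Algebra.lmul K L s) g = Algebra.lmul K L (aeval s g) :=
      fun g => Polynomial.aeval_algHom_apply (Algebra.lmul K L) s g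
    rw [h1, h1, h0, map_zero] at key
    have key2 : Algebra.lmul K L (aeval s (derivative (minpoly K s))) * c = 0 := by
      rw [← key]
      simp
    set u := aeval s (derivative (minpoly K s))
    calc c = Algebra.lmul K L u⁻¹ * (Algebra.lmul K L u * c) := by
            rw [← mul_assoc, ← map_mul, inv_mul_cancel₀ hder, map_one, one_mul]
      _ = 0 := by rw [key2, mul_zero]

end Aux

set_option maxHeartbeats 1600000 in
/-- For a finite extension `L/K` in characteristic `p > 0`, `D(L/K) = End_{L^{sep}}(L)`,
the centralizer in `End_K(L)` of the multiplication operators by elements of the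
separable closure of `K` in `L`. -/
theorem stmt15 (K L : Type*) [Field K] [Field L] [Algebra K L] [FiniteDimensional K L]
    (p : ℕ) (hp : p.Prime) [CharP K p] :
    diffOps K L =
      (Subalgebra.centralizer K (Algebra.lmul K L '' (separableClosure K L : Set L)) :
        Set (Module.End K L)) := by
  classical
  haveI := Fact.mk hp
  apply Set.Subset.antisymm
  · intro δ hδ
    obtain ⟨n, hn⟩ := Set.mem_iUnion.1 hδ
    rw [SetLike.mem_coe, Subalgebra.mem_centralizer_iff]
    rintro g ⟨s, hs, rfl⟩
    exact (fil_comm K L n δ hn s hs).symm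
  · intro δ hδ
    rw [SetLike.mem_coe, Subalgebra.mem_centralizer_iff] at hδ
    have hδ' : ∀ s ∈ separableClosure K L,
        δ * Algebra.lmul K L s = Algebra.lmul K L s * δ :=
      fun s hs => (hδ _ ⟨s, hs, rfl⟩).symm
    -- instances
    haveI : Nontrivial (Module.End K L) := ⟨1, 0, fun h => one_ne_zero (α := L)
      (by simpa using LinearMap.congr_fun h 1)⟩
    haveI : Nontrivial (Module.End K (Module.End K L)) := ⟨1, 0, fun h => one_ne_zero
      (α := Module.End K L) (by simpa using LinearMap.congr_fun h 1)⟩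
    haveI : CharP (Module.End K (Module.End K L)) p :=
      charP_of_injective_algebraMap
        (algebraMap K (Module.End K (Module.End K L))).injective p
    haveI : CharP (separableClosure K L) p :=
      charP_of_injective_algebraMap (algebraMap K (separableClosure K L)).injective p
    haveI : ExpChar (separableClosure K L) p := ExpChar.prime hp
    haveI : Algebra.IsAlgebraic K L := Algebra.IsAlgebraic.of_finite K L
    -- nilpotency of commutators
    have nilp : ∀ l : L, ∀ m : ℕ, l ^ p ^ m ∈ separableClosure K L →
        ((opD K L l) ^ p ^ m) δ = 0 := by
      intro l m hl
      have hcomm : Commute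
          (LinearMap.mulRight K (Algebra.lmul K L l) : Module.End K (Module.End K L))
          (LinearMap.mulLeft K (Algebra.lmul K L l) : Module.End K (Module.End K L)) :=
        (LinearMap.commute_mulLeft_right _ _).symm
      have h1 : (opD K L l) ^ p ^ m
          = LinearMap.mulRight K (Algebra.lmul K L l) ^ p ^ m
            - LinearMap.mulLeft K (Algebra.lmul K L l) ^ p ^ m := by
        show (LinearMap.mulRight K (Algebra.lmul K L l)
          - LinearMap.mulLeft K (Algebra.lmul K L l)) ^ p ^ m = _
        exact sub_pow_char_pow_of_commute (R := Module.End K (Module.End K L)) p m hcomm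
      rw [h1, LinearMap.pow_mulRight, LinearMap.pow_mulLeft, ← map_pow]
      simp only [LinearMap.sub_apply, LinearMap.mulRight_apply, LinearMap.mulLeft_apply]
      rw [hδ' _ hl, sub_self]
    -- basis and uniform exponent
    set M := Module.finrank K L with hM
    set b : Module.Basis (Fin M) K L := Module.finBasis K L with hb
    have hpow : ∀ i : Fin M, ∃ n : ℕ, (b i) ^ p ^ n ∈ separableClosure K L := by
      intro i
      obtain ⟨n, y, hy⟩ := IsPurelyInseparable.pow_mem (separableClosure K L) p (b i)
      exact ⟨n, hy ▸ y.2⟩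
    choose e he using hpow
    set E0 : ℕ := Finset.univ.sup e with hE0
    set q : ℕ := p ^ E0 with hq
    have hbq : ∀ i : Fin M, (b i) ^ q ∈ separableClosure K L := by
      intro i
      have hle : e i ≤ E0 := Finset.le_sup (Finset.mem_univ i)
      have : (b i) ^ q = ((b i) ^ p ^ (e i)) ^ p ^ (E0 - e i) := by
        rw [← pow_mul, ← pow_add, Nat.add_sub_cancel' hle]
      rw [this]
      exact pow_mem (he i) _
    -- the commuting family of basic commutator operators
    set bop : Fin M → Module.End K (Module.End K L) := fun i => opD K L (b i) with hbop
    have pcomm : ∀ (k : Fin M → ℕ) (t : Finset (Fin M)),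
        ((t : Set (Fin M))).Pairwise (Function.onFun Commute (fun i => bop i ^ k i)) :=
      fun k t x _ y _ _ => Commute.pow_pow (opD_commute K L (b x) (b y)) _ _
    set f : (Fin M → ℕ) → Module.End K L :=
      fun k => (Finset.univ.noncommProd (fun i => bop i ^ k i) (pcomm k Finset.univ)) δ
      with hf
    -- f of zero is δ
    have hf0 : f (fun _ => 0) = δ := by
      simp only [hf]
      have h1 : Finset.univ.noncommProd (fun i => bop i ^ ((fun _ => (0:ℕ)) i))
          (pcomm (fun _ => 0) Finset.univ) = 1 := by
        rw [Finset.noncommProd_eq_pow_card _ _ _ 1 (fun x _ => pow_zero _), one_pow]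
      rw [h1, Module.End.one_apply]
    -- stepping
    have hstep : ∀ (k : Fin M → ℕ) (j : Fin M),
        opD K L (b j) (f k) = f (Function.update k j (k j + 1)) := by
      intro k j
      have e1 : bop j ^ k j
            * (Finset.univ.erase j).noncommProd (fun i => bop i ^ k i)
                (pcomm k (Finset.univ.erase j))
          = Finset.univ.noncommProd (fun i => bop i ^ k i) (pcomm k Finset.univ) :=
        Finset.mul_noncommProd_erase Finset.univ (Finset.mem_univ j)
          (fun i => bop i ^ k i) (pcomm k Finset.univ)
      have e2 : bop j ^ ((Function.update k j (k j + 1)) j)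
            * (Finset.univ.erase j).noncommProd
                (fun i => bop i ^ (Function.update k j (k j + 1)) i)
                (pcomm (Function.update k j (k j + 1)) (Finset.univ.erase j))
          = Finset.univ.noncommProd
              (fun i => bop i ^ (Function.update k j (k j + 1)) i)
              (pcomm (Function.update k j (k j + 1)) Finset.univ) :=
        Finset.mul_noncommProd_erase Finset.univ (Finset.mem_univ j)
          (fun i => bop i ^ (Function.update k j (k j + 1)) i)
          (pcomm (Function.update k j (k j + 1)) Finset.univ)
      have e3 : (Finset.univ.erase j).noncommProd
            (fun i => bop i ^ (Function.update k j (k j + 1)) i)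
            (pcomm (Function.update k j (k j + 1)) (Finset.univ.erase j))
          = (Finset.univ.erase j).noncommProd (fun i => bop i ^ k i)
            (pcomm k (Finset.univ.erase j)) :=
        Finset.noncommProd_congr rfl
          (fun x hx => by rw [Function.update_of_ne (Finset.ne_of_mem_erase hx)]) _
      have hm : Finset.univ.noncommProd
            (fun i => bop i ^ (Function.update k j (k j + 1)) i)
            (pcomm (Function.update k j (k j + 1)) Finset.univ)
          = opD K L (b j)
            * Finset.univ.noncommProd (fun i => bop i ^ k i) (pcomm k Finset.univ) := by
        rw [← e2, e3, Function.update_self, ← e1, pow_succ', mul_assoc]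
      simp only [hf, hm, Module.End.mul_apply]
    -- vanishing for large exponents
    have hvanish : ∀ (k : Fin M → ℕ) (j : Fin M), q ≤ k j → f k = 0 := by
      intro k j hqk
      have e1 : (Finset.univ.erase j).noncommProd (fun i => bop i ^ k i)
            (pcomm k (Finset.univ.erase j)) * bop j ^ k j
          = Finset.univ.noncommProd (fun i => bop i ^ k i) (pcomm k Finset.univ) :=
        Finset.noncommProd_erase_mul Finset.univ (Finset.mem_univ j)
          (fun i => bop i ^ k i) (pcomm k Finset.univ)
      have e2 : (bop j ^ k j) δ = 0 := by
        have h3 : bop j ^ k j = bop j ^ (k j - q) * bop j ^ q := by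
          rw [← pow_add, Nat.sub_add_cancel hqk]
        have h4 : (bop j ^ q) δ = 0 := nilp (b j) E0 (hbq j)
        rw [h3, Module.End.mul_apply, h4, map_zero]
      simp only [hf]
      rw [← e1, Module.End.mul_apply, e2, map_zero]
    -- main span argument
    have key : ∀ ls : List L, ls.foldr (fun l x => opD K L l x) δ ∈
        Submodule.span K (f '' {k | ls.length ≤ ∑ i, k i}) := by
      intro ls
      induction ls with
      | nil =>
        exact Submodule.subset_span ⟨fun _ => 0, by simp, hf0⟩
      | cons l ls ih =>
        have hgen : ∀ x ∈ f '' {k | ls.length ≤ ∑ i, k i},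
            opD K L l x ∈ Submodule.span K (f '' {k | ls.length + 1 ≤ ∑ i, k i}) := by
          rintro _ ⟨k, hk, rfl⟩
          have hl : opD K L l (f k) = ∑ j, (b.repr l) j • opD K L (b j) (f k) := by
            conv_lhs => rw [← b.sum_repr l]
            rw [map_sum]
            simp only [map_smul, LinearMap.sum_apply, LinearMap.smul_apply]
          rw [hl]
          refine Submodule.sum_mem _ (fun j _ => Submodule.smul_mem _ _ ?_)
          refine Submodule.subset_span ⟨Function.update k j (k j + 1), ?_, (hstep k j).symm⟩
          have hsum : ∑ i, (Function.update k j (k j + 1)) i = (∑ i, k i) + 1 := by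
            rw [Finset.sum_update_of_mem (Finset.mem_univ j), Finset.sdiff_singleton_eq_erase]
            rw [← Finset.add_sum_erase Finset.univ k (Finset.mem_univ j)]
            ring
          have hk' : ls.length ≤ ∑ i, k i := hk
          simp only [Set.mem_setOf_eq, hsum]
          omega
        have hfold : List.foldr (fun l x => opD K L l x) δ (l :: ls)
            = opD K L l (List.foldr (fun l x => opD K L l x) δ ls) := rfl
        rw [hfold]
        refine Submodule.span_induction hgen ?_ ?_ ?_ ih
        · rw [map_zero]; exact Submodule.zero_mem _
        · intro x y _ _ hx hy
          rw [map_add]; exact Submodule.add_mem _ hx hy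
        · intro c x _ hx
          rw [map_smul]; exact Submodule.smul_mem _ _ hx
    -- all long folds vanish
    have hzero : ∀ ls : List L, ls.length = M * (q - 1) + 1 →
        ls.foldr (fun l x => opD K L l x) δ = 0 := by
      intro ls hlen
      have h1 := key ls
      have h2 : f '' {k | ls.length ≤ ∑ i, k i} ⊆ {0} := by
        rintro _ ⟨k, hk, rfl⟩
        simp only [Set.mem_setOf_eq, hlen] at hk
        have hex : ∃ j, q ≤ k j := by
          by_contra hcon
          push_neg at hcon
          have hsum : ∑ i, k i ≤ ∑ _i : Fin M, (q - 1) :=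
            Finset.sum_le_sum (fun i _ => Nat.le_sub_one_of_lt (hcon i))
          rw [Finset.sum_const, Finset.card_univ, Fintype.card_fin, smul_eq_mul] at hsum
          omega
        obtain ⟨j, hj⟩ := hex
        exact hvanish k j hj
      have hle : Submodule.span K (f '' {k | ls.length ≤ ∑ i, k i}) ≤ ⊥ := by
        rw [Submodule.span_le]
        intro x hx
        have := h2 hx
        simpa using this
      simpa using hle h1
    refine Set.mem_iUnion.2 ⟨M * (q - 1), mem_fil_of_fold K L _ δ (fun ls hls => ?_)⟩
    exact hzero ls hls
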